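/- Let G be a finite connected simple graph with a fixed vertex v₁ such that G − v₁ is connected, let u be a vertex of G with u ≠ v₁, and let G⁺ be the graph obtained from G by adding a new vertex z joined by a pendant edge to u. Writing δ_H(x) = t_H(x) − t_{H−v₁}(x), we have δ_{G⁺}(z) = δ_{G⁺}(u) + 1 = δ_G(u) + 1. -/

import Mathlib

open SimpleGraph

/-- The Wiener index: sum of distances over unordered pairs of vertices. -/
noncomputable def wiener {V : Type*} [Fintype V] (G : SimpleGraph V) : ℕ :=
  (∑ u : V, ∑ v : V, G.dist u v) / 2

/-- The transmission of a vertex: sum of distances to all vertices. -/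
noncomputable def transmission {V : Type*} [Fintype V] (G : SimpleGraph V) (v : V) : ℕ :=
  ∑ u : V, G.dist v u

/-- The graph `G - v`: induced subgraph on the vertices distinct from `v`. -/
def delVert {V : Type*} (G : SimpleGraph V) (v : V) : SimpleGraph {u : V // u ≠ v} :=
  SimpleGraph.comap Subtype.val G

/-- A vertex is good if `G - v` is connected and has the same Wiener index as `G`. -/
def good {V : Type*} [Fintype V] [DecidableEq V] (G : SimpleGraph V) (v : V) : Prop :=
  (delVert G v).Connected ∧ wiener (delVert G v) = wiener G

/-- `δ_G(x) = t_G(x) − t_{G−v₁}(x)` (as an integer), for a fixed vertex `v₁` and `x ≠ v₁`.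
(The value when `x = v₁` is irrelevant and set to `t_G(x)`.) -/
noncomputable def delta {V : Type*} [Fintype V] [DecidableEq V]
    (G : SimpleGraph V) (v₁ x : V) : ℤ :=
  (transmission G x : ℤ) - if h : x = v₁ then 0 else (transmission (delVert G v₁) ⟨x, h⟩ : ℤ)

/-- The graph `G⁺` on `V ∪ {z}` (here `Option V`, with `z = none`) obtained from `G`
by adding the single pendant edge between the new vertex `z` and `u`. -/
def addPendant {V : Type*} (G : SimpleGraph V) (u : V) : SimpleGraph (Option V) where
  Adj x y :=
    match x, y with
    | some a, some b => G.Adj a b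
    | some a, none => a = u
    | none, some b => b = u
    | none, none => False
  symm := by
    constructor
    intro x y h
    cases x <;> cases y <;> simp_all <;> exact G.symm.symm _ _ h
  loopless := by
    constructor
    intro x h
    cases x <;> simp_all

section Aux
variable {V : Type*} (G : SimpleGraph V) (u : V)

def pendHom : G →g addPendant G u := ⟨some, fun h => h⟩

lemma pend_walk_lb (hG : G.Connected) : ∀ {x y : Option V}
    (p : (addPendant G u).Walk x y),
    G.dist (x.elim u id) (y.elim u id) ≤ p.length := by
  intro x y p
  induction p with
  | nil => simp
  | cons h q ih =>
    rename_i x x' y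
    simp only [Walk.length_cons]
    cases x with
    | some a =>
      cases x' with
      | some b =>
        have hab : G.Adj a b := h
        have h1 : G.dist a b = 1 := dist_eq_one_iff_adj.mpr hab
        have h2 := hG.dist_triangle (u := a) (v := b) (w := y.elim u id)
        have ih' : G.dist b (y.elim u id) ≤ q.length := ih
        show G.dist a (y.elim u id) ≤ q.length + 1
        omega
      | none =>
        have ha : a = u := h
        subst ha
        have ih' : G.dist a (y.elim a id) ≤ q.length := ih
        show G.dist a (y.elim a id) ≤ q.length + 1
        omega
    | none =>
      cases x' with
      | some b =>
        have hb : b = u := h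
        subst hb
        have ih' : G.dist b (y.elim b id) ≤ q.length := ih
        show G.dist b (y.elim b id) ≤ q.length + 1
        omega
      | none => exact absurd h (by simp [addPendant])

lemma pend_dist_some_some (hG : G.Connected) (a b : V) :
    (addPendant G u).dist (some a) (some b) = G.dist a b := by
  obtain ⟨p, hp⟩ := hG.exists_walk_length_eq_dist a b
  refine le_antisymm ?_ ?_
  · have := dist_le (p.map (pendHom G u))
    simp only [Walk.length_map, Walk.length_cons, hp] at this
    exact this
  · have hr : (addPendant G u).Reachable (some a) (some b) := ⟨p.map (pendHom G u)⟩
    obtain ⟨q, hq⟩ := hr.exists_walk_length_eq_dist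
    have h2 : G.dist a b ≤ q.length := pend_walk_lb G u hG q
    omega

lemma pend_dist_none_some (hG : G.Connected) (b : V) :
    (addPendant G u).dist none (some b) = G.dist u b + 1 := by
  obtain ⟨p, hp⟩ := hG.exists_walk_length_eq_dist u b
  have hadj : (addPendant G u).Adj none (some u) := rfl
  refine le_antisymm ?_ ?_
  · have := dist_le (Walk.cons hadj (p.map (pendHom G u)))
    exact this.trans (by show (p.map (pendHom G u)).length + 1 ≤ _; rw [Walk.length_map, hp])
  · have hr : (addPendant G u).Reachable none (some b) :=
      ⟨Walk.cons hadj (p.map (pendHom G u))⟩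
    obtain ⟨q, hq⟩ := hr.exists_walk_length_eq_dist
    cases q with
    | cons h r =>
      rename_i x
      cases x with
      | none => exact absurd h (by simp [addPendant])
      | some c =>
        have hc : c = u := h
        subst hc
        have h2 : G.dist c b ≤ r.length := pend_walk_lb G c hG r
        simp only [Walk.length_cons] at hq
        omega

section TransPend
variable [Fintype V]

lemma pend_trans_some (hG : G.Connected) (a : V) :
    transmission (addPendant G u) (some a) = transmission G a + (G.dist u a + 1) := by
  unfold transmission
  rw [Fintype.sum_option]
  have h1 : (addPendant G u).dist (some a) none = G.dist u a + 1 := by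
    rw [dist_comm, pend_dist_none_some G u hG]
  have h2 : ∀ b : V, (addPendant G u).dist (some a) (some b) = G.dist a b :=
    fun b => pend_dist_some_some G u hG a b
  simp only [h1, h2]
  omega

lemma pend_trans_none (hG : G.Connected) :
    transmission (addPendant G u) none = transmission G u + Fintype.card V := by
  unfold transmission
  rw [Fintype.sum_option]
  have h2 : ∀ b : V, (addPendant G u).dist none (some b) = G.dist u b + 1 :=
    fun b => pend_dist_none_some G u hG b
  simp only [h2, dist_self, Finset.sum_add_distrib, Finset.sum_const, Finset.card_univ,
    smul_eq_mul, mul_one]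
  omega

end TransPend

lemma iso_dist {V W : Type*} {G : SimpleGraph V} {H : SimpleGraph W} (e : G ≃g H) (a b : V) :
    H.dist (e a) (e b) = G.dist a b := by
  by_cases h : G.Reachable a b
  · obtain ⟨p, hp⟩ := h.exists_walk_length_eq_dist
    have hr : H.Reachable (e a) (e b) := ⟨p.map e.toHom⟩
    obtain ⟨q, hq⟩ := hr.exists_walk_length_eq_dist
    refine le_antisymm ?_ ?_
    · have := dist_le (p.map e.toHom)
      simpa [hp] using this
    · have key : G.dist a b ≤ q.length := by
        have := dist_le ((q.map e.symm.toHom).copy (by simp) (by simp) : G.Walk a b)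
        simpa using this
      omega
  · have h' : ¬ H.Reachable (e a) (e b) :=
      fun ⟨q⟩ => h ⟨(q.map e.symm.toHom).copy (by simp) (by simp)⟩
    rw [dist_eq_zero_of_not_reachable h, dist_eq_zero_of_not_reachable h']

lemma iso_transmission {V W : Type*} [Fintype V] [Fintype W]
    {G : SimpleGraph V} {H : SimpleGraph W} (e : G ≃g H) (a : V) :
    transmission H (e a) = transmission G a := by
  unfold transmission
  rw [← Equiv.sum_comp e.toEquiv (fun w => H.dist (e a) w)]
  exact Finset.sum_congr rfl fun b _ => iso_dist e a b

def delPendIso (v₁ : V) (hu : u ≠ v₁) :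
    delVert (addPendant G u) (some v₁) ≃g addPendant (delVert G v₁) ⟨u, hu⟩ where
  toFun x := match x with
    | ⟨none, _⟩ => none
    | ⟨some a, h⟩ => some ⟨a, fun ha => h (by rw [ha])⟩
  invFun y := match y with
    | none => ⟨none, by simp⟩
    | some a => ⟨some a.1, by simp [a.2]⟩
  left_inv := by rintro ⟨(_|a), h⟩ <;> rfl
  right_inv := by rintro (_|⟨a, h⟩) <;> rfl
  map_rel_iff' := by
    rintro ⟨(_|a), hx⟩ ⟨(_|b), hy⟩ <;>
      simp [delVert, addPendant, Subtype.ext_iff]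

end Aux

/-- Adding a pendant vertex `z` at `u ≠ v₁`: the new vertex satisfies
`δ_{G⁺}(z) = δ_{G⁺}(u) + 1 = δ_G(u) + 1`. -/
theorem delta_addPendant {V : Type*} [Fintype V] [DecidableEq V]
    (G : SimpleGraph V) (hG : G.Connected) (v₁ : V) (hconn : (delVert G v₁).Connected)
    (u : V) (hu : u ≠ v₁) :
    delta (addPendant G u) (some v₁) none = delta (addPendant G u) (some v₁) (some u) + 1 ∧
    delta (addPendant G u) (some v₁) (some u) + 1 = delta G v₁ u + 1 := by
  have hne1 : (none : Option V) ≠ some v₁ := by simp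
  have hne2 : (some u : Option V) ≠ some v₁ := by simp [hu]
  have hn : Fintype.card {w : V // w ≠ v₁} + 1 = Fintype.card V := by
    have h1 := Fintype.card_subtype_compl (fun w : V => w = v₁)
    have h2 : Fintype.card {w : V // w = v₁} = 1 := Fintype.card_subtype_eq v₁
    have h3 : 0 < Fintype.card V := Fintype.card_pos_iff.mpr ⟨v₁⟩
    simp only [h2] at h1
    have h4 : Fintype.card {w : V // w ≠ v₁} = Fintype.card {w : V // ¬ w = v₁} := rfl
    omega
  have t1 : transmission (addPendant G u) none = transmission G u + Fintype.card V :=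
    pend_trans_none G u hG
  have t2 : transmission (addPendant G u) (some u) = transmission G u + 1 := by
    have h := pend_trans_some G u hG u
    rw [dist_self] at h
    simpa using h
  have t3 : transmission (delVert (addPendant G u) (some v₁)) ⟨none, hne1⟩
      = transmission (delVert G v₁) ⟨u, hu⟩ + Fintype.card {w : V // w ≠ v₁} := by
    have h := iso_transmission (delPendIso G u v₁ hu) ⟨none, hne1⟩
    have he : (delPendIso G u v₁ hu) ⟨none, hne1⟩ = none := rfl
    rw [he] at h
    rw [← h]
    exact pend_trans_none (delVert G v₁) ⟨u, hu⟩ hconn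
  have t4 : transmission (delVert (addPendant G u) (some v₁)) ⟨some u, hne2⟩
      = transmission (delVert G v₁) ⟨u, hu⟩ + 1 := by
    have h := iso_transmission (delPendIso G u v₁ hu) ⟨some u, hne2⟩
    have he : (delPendIso G u v₁ hu) ⟨some u, hne2⟩ = some ⟨u, hu⟩ := rfl
    rw [he] at h
    rw [← h]
    have h2 := pend_trans_some (delVert G v₁) ⟨u, hu⟩ hconn ⟨u, hu⟩
    rw [dist_self] at h2
    simpa using h2
  unfold delta
  rw [dif_neg hne1, dif_neg hne2, dif_neg hu]
  rw [t1, t2, t3, t4]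
  push_cast
  omega
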